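/- arXiv:1202.5730 — 4 statements merged into one kernel-verified Lean document; each statement's English description precedes it below -/
import Mathlib

section
/- For all integers a, k and every positive integer ℓ, the number a^ℓ · ∏_{j=0}^{ℓ-1} (k + j·a) is divisible by ℓ!. -/
open Finset

/-- ascFactorial as a product. -/
lemma myAscFactorial_eq_prod (n : ℕ) : ∀ k : ℕ, n.ascFactorial k = ∏ i ∈ range k, (n + i)
  | 0 => rfl
  | k + 1 => by
      rw [Nat.ascFactorial_succ, prod_range_succ, myAscFactorial_eq_prod n k, mul_comm]

/-- `ℓ!` divides a product of `ℓ` consecutive integers. -/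
lemma factorial_dvd_prod_consecutive (ℓ : ℕ) (n : ℤ) :
    ((Nat.factorial ℓ : ℕ) : ℤ) ∣ ∏ j ∈ range ℓ, (n + (j : ℤ)) := by
  obtain ⟨m, rfl | rfl⟩ := Int.eq_nat_or_neg n
  · have h : (∏ j ∈ range ℓ, ((m : ℤ) + (j : ℤ))) = ((m.ascFactorial ℓ : ℕ) : ℤ) := by
      rw [myAscFactorial_eq_prod]
      push_cast
      rfl
    rw [h]
    exact_mod_cast Nat.factorial_dvd_ascFactorial m ℓ
  · by_cases hm : m < ℓ
    · have hz : (∏ j ∈ range ℓ, (-(m : ℤ) + (j : ℤ))) = 0 := by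
        apply Finset.prod_eq_zero (Finset.mem_range.mpr hm)
        simp
      rw [hz]
      exact dvd_zero _
    · push_neg at hm
      have h2 : (∏ j ∈ range ℓ, ((m : ℤ) - (j : ℤ))) = ((m.descFactorial ℓ : ℕ) : ℤ) := by
        rw [Nat.descFactorial_eq_prod_range, Nat.cast_prod]
        apply Finset.prod_congr rfl
        intro i hi
        rw [Nat.cast_sub (le_trans (le_of_lt (Finset.mem_range.mp hi)) hm)]
      have h : (∏ j ∈ range ℓ, (-(m : ℤ) + (j : ℤ)))
          = (-1) ^ ℓ * ((m.descFactorial ℓ : ℕ) : ℤ) := by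
        have hc : ∀ j ∈ range ℓ, (-(m : ℤ) + (j : ℤ)) = (-1) * ((m : ℤ) - (j : ℤ)) := by
          intro j _; ring
        rw [Finset.prod_congr rfl hc, Finset.prod_mul_distrib, Finset.prod_const, h2,
          Finset.card_range]
      rw [h]
      exact Dvd.dvd.mul_left (by exact_mod_cast Nat.factorial_dvd_descFactorial m ℓ) _

/-- Legendre bound: `v_p(ℓ!) ≤ ℓ`. -/
lemma factorization_factorial_le (p ℓ : ℕ) (hp : p.Prime) :
    (Nat.factorial ℓ).factorization p ≤ ℓ := by
  haveI : Fact p.Prime := ⟨hp⟩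
  have hL := sub_one_mul_padicValNat_factorial (p := p) ℓ
  have h1 : padicValNat p (Nat.factorial ℓ) ≤ (p - 1) * padicValNat p (Nat.factorial ℓ) :=
    Nat.le_mul_of_pos_left _ (by have := hp.two_le; omega)
  have h2 : (p - 1) * padicValNat p (Nat.factorial ℓ) ≤ ℓ := by
    rw [hL]; exact Nat.sub_le _ _
  rw [Nat.factorization_def _ hp]
  exact le_trans h1 h2

/-- The key prime-power divisibility. -/
lemma prime_pow_dvd (a k : ℤ) (ℓ : ℕ) (p : ℕ) (hp : p.Prime) :
    ((p : ℤ)) ^ ((Nat.factorial ℓ).factorization p) ∣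
      a ^ ℓ * ∏ j ∈ range ℓ, (k + (j : ℤ) * a) := by
  set N := (Nat.factorial ℓ).factorization p with hN
  by_cases hpa : (p : ℤ) ∣ a
  · have h1 : (p : ℤ) ^ N ∣ (p : ℤ) ^ ℓ :=
      pow_dvd_pow _ (factorization_factorial_le p ℓ hp)
    exact dvd_mul_of_dvd_left (h1.trans (pow_dvd_pow_of_dvd hpa ℓ)) _
  · -- a is invertible mod p^N
    have hp' : Prime (p : ℤ) := Nat.prime_iff_prime_int.mp hp
    have hcop : IsCoprime ((p : ℤ) ^ N) a :=
      IsCoprime.pow_left (hp'.coprime_iff_not_dvd.mpr hpa)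
    obtain ⟨u, v, huv⟩ := hcop
    -- u * p^N + v * a = 1
    set q : ℕ := p ^ N with hq
    have hqc : ((q : ℕ) : ℤ) = (p : ℤ) ^ N := by push_cast [hq]; ring
    -- in ZMod q, a * v = 1
    have hav : ((a : ZMod q)) * ((v : ℤ) : ZMod q) = 1 := by
      have : ((u * (p : ℤ) ^ N + v * a : ℤ) : ZMod q) = ((1 : ℤ) : ZMod q) := by rw [huv]
      push_cast at this
      have hz : ((p : ZMod q)) ^ N = 0 := by
        have : ((q : ℕ) : ZMod q) = 0 := ZMod.natCast_self q
        rw [hq] at this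
        push_cast at this
        exact this
      rw [hz, mul_zero, zero_add, mul_comm] at this
      exact_mod_cast this
    -- q divides ℓ!
    have hqfac : (q : ℤ) ∣ ((Nat.factorial ℓ : ℕ) : ℤ) := by
      exact_mod_cast Nat.ordProj_dvd (Nat.factorial ℓ) p
    -- q divides the consecutive product for v*k
    have hqprod : (q : ℤ) ∣ ∏ j ∈ range ℓ, (v * k + (j : ℤ)) :=
      hqfac.trans (factorial_dvd_prod_consecutive ℓ (v * k))
    -- hence the AP product is 0 mod q
    have hkey : ((q : ℤ)) ∣ ∏ j ∈ range ℓ, (k + (j : ℤ) * a) := by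
      rw [← ZMod.intCast_zmod_eq_zero_iff_dvd]
      push_cast
      have hfac : ∀ j ∈ range ℓ,
          ((k : ZMod q) + (j : ZMod q) * (a : ZMod q))
            = (a : ZMod q) * (((v * k : ℤ) : ZMod q) + (j : ZMod q)) := by
        intro j _
        push_cast
        rw [mul_add]
        rw [show (a : ZMod q) * ((v : ZMod q) * (k : ZMod q))
            = ((a : ZMod q) * (v : ZMod q)) * (k : ZMod q) by ring]
        have : (a : ZMod q) * (v : ZMod q) = 1 := by exact_mod_cast hav
        rw [this, one_mul]
        ring
      rw [Finset.prod_congr rfl hfac, Finset.prod_mul_distrib, Finset.prod_const]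
      have h0 : ((∏ j ∈ range ℓ, (v * k + (j : ℤ)) : ℤ) : ZMod q) = 0 :=
        (ZMod.intCast_zmod_eq_zero_iff_dvd _ q).mpr hqprod
      push_cast at h0 ⊢
      rw [h0, mul_zero]
    rw [← hqc]
    exact dvd_mul_of_dvd_right hkey _

/-- For all integers `a`, `k` and every positive integer `ℓ`, the number
`a^ℓ * ∏_{j=0}^{ℓ-1} (k + j·a)` is divisible by `ℓ!`. -/
theorem stmt_0 (a k : ℤ) (ℓ : ℕ) (hℓ : 0 < ℓ) :
    ((Nat.factorial ℓ : ℤ)) ∣ a ^ ℓ * ∏ j ∈ Finset.range ℓ, (k + (j : ℤ) * a) := by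
  set m : ℤ := a ^ ℓ * ∏ j ∈ Finset.range ℓ, (k + (j : ℤ) * a) with hm
  by_cases hm0 : m = 0
  · rw [hm0]; exact dvd_zero _
  · rw [← Int.natAbs_dvd_natAbs]
    rw [Int.natAbs_natCast]
    have hM : m.natAbs ≠ 0 := fun h => hm0 (Int.natAbs_eq_zero.mp h)
    rw [← Nat.factorization_le_iff_dvd (Nat.factorial_ne_zero ℓ) hM]
    rw [Finsupp.le_def]
    intro p
    by_cases hp : p.Prime
    · rw [← Nat.Prime.pow_dvd_iff_le_factorization hp hM]
      have := prime_pow_dvd a k ℓ p hp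
      rw [← hm] at this
      have h2 := Int.natAbs_dvd_natAbs.mpr this
      rwa [Int.natAbs_pow, Int.natAbs_natCast] at h2
    · rw [Nat.factorization_eq_zero_of_not_prime _ hp]
      exact Nat.zero_le _
end

section
/- Let L be a Lie algebra over a field of characteristic 0 containing an element h, with standard coproduct Δ₀ on U(L). Then for every positive integer r and every scalar s, Δ₀(h^{[r]}) = Σ_{i=0}^{r} C(r,i) · h_{−s}^{[i]} ⊗ h_{s}^{[r−i]}, where h_a^{[m]} := (h+a)(h+a−1)···(h+a−m+1). -/
open TensorProduct

/-- The shifted falling factorial `h_a^{[m]} = (h+a)(h+a-1)⋯(h+a-m+1)`. -/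
def fallingFac {R A : Type*} [CommRing R] [Ring A] [Algebra R A] (h : A) (a : R) : ℕ → A
  | 0 => 1
  | s + 1 => fallingFac h a s * (h + algebraMap R A (a - s))

lemma fallingFac_succ {R A : Type*} [CommRing R] [Ring A] [Algebra R A] (h : A) (a : R) (n : ℕ) :
    fallingFac h a (n+1) = fallingFac h a n * (h + algebraMap R A (a - n)) := rfl

lemma fallingFac_mul_h {R A : Type*} [CommRing R] [Ring A] [Algebra R A] (h : A) (a : R) (n : ℕ) :
    fallingFac h a n * h = fallingFac h a (n+1) + ((n : R) - a) • fallingFac h a n := by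
  rw [fallingFac_succ, mul_add]
  have h1 : fallingFac h a n * algebraMap R A (a - n) = (a - n) • fallingFac h a n := by
    rw [Algebra.smul_def, Algebra.commutes]
  rw [h1, add_assoc, ← add_smul]
  simp

/-- In the universal enveloping algebra of a Lie algebra over a field of characteristic 0
(modelled as a bialgebra `A` over `F`), for a primitive element `h`, every positive
integer `r` and every scalar `s`:
`Δ₀(h^{[r]}) = Σ_{i=0}^{r} C(r,i) · h_{−s}^{[i]} ⊗ h_{s}^{[r−i]}`. -/
theorem stmt_4 (F A : Type*) [Field F] [CharZero F] [Ring A] [Bialgebra F A]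
    (h : A) (hprim : Coalgebra.comul (R := F) h = h ⊗ₜ[F] (1 : A) + (1 : A) ⊗ₜ[F] h)
    (r : ℕ) (hr : 0 < r) (s : F) :
    Coalgebra.comul (R := F) (fallingFac h (0 : F) r)
      = ∑ i ∈ Finset.range (r + 1),
          (r.choose i : F) • (fallingFac h (-s) i ⊗ₜ[F] fallingFac h s (r - i)) := by
  clear hr
  induction r with
  | zero => simp [fallingFac, Algebra.TensorProduct.one_def]
  | succ n ih =>
    set a : ℕ → A := fallingFac h (-s) with ha
    set b : ℕ → A := fallingFac h s with hb
    have key : ∀ i ∈ Finset.range (n + 1),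
        ((n.choose i : F) • (a i ⊗ₜ[F] b (n - i))) *
          Coalgebra.comul (R := F) (h + algebraMap F A ((0:F) - n))
        = (n.choose i : F) • (a (i+1) ⊗ₜ[F] b (n - i))
          + (n.choose i : F) • (a i ⊗ₜ[F] b (n + 1 - i)) := by
      intro i hi
      rw [Finset.mem_range] at hi
      have hin : i ≤ n := Nat.lt_succ_iff.mp hi
      rw [map_add, hprim, Bialgebra.comul_algebraMap]
      have halg : (algebraMap F (A ⊗[F] A)) ((0:F) - n) = ((0:F) - n) • (1 ⊗ₜ[F] 1) := by
        rw [Algebra.algebraMap_eq_smul_one, Algebra.TensorProduct.one_def]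
      rw [halg, smul_mul_assoc, mul_add, mul_add, mul_smul_comm]
      rw [Algebra.TensorProduct.tmul_mul_tmul, Algebra.TensorProduct.tmul_mul_tmul,
        Algebra.TensorProduct.tmul_mul_tmul]
      simp only [mul_one]
      rw [show a i * h = a (i+1) + ((i : F) - (-s)) • a i from fallingFac_mul_h h (-s) i,
        show b (n-i) * h = b (n-i+1) + (((n-i : ℕ) : F) - s) • b (n-i) from fallingFac_mul_h h s (n-i)]
      have hcast : ((n - i : ℕ) : F) = (n : F) - i := by
        rw [Nat.cast_sub hin]
      have hidx : n - i + 1 = n + 1 - i := by omega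
      rw [hidx, hcast]
      simp only [add_tmul, tmul_add, ← smul_tmul', tmul_smul, smul_add, smul_smul]
      match_scalars <;> ring
    rw [fallingFac_succ, Bialgebra.comul_mul, ih, Finset.sum_mul,
      Finset.sum_congr rfl key, Finset.sum_add_distrib]
    have hT : (∑ i ∈ Finset.range (n+1+1), (((n+1).choose i : ℕ) : F) • (a i ⊗ₜ[F] b (n+1-i)))
        = (∑ i ∈ Finset.range (n+1), ((n.choose i : ℕ) : F) • (a (i+1) ⊗ₜ[F] b (n-i)))
        + ∑ i ∈ Finset.range (n+1), ((n.choose i : ℕ) : F) • (a i ⊗ₜ[F] b (n+1-i)) := by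
      rw [Finset.sum_range_succ' (fun i => (((n+1).choose i : ℕ) : F) • (a i ⊗ₜ[F] b (n+1-i))) (n+1)]
      have step : ∀ i ∈ Finset.range (n+1),
          (((n+1).choose (i+1) : ℕ) : F) • (a (i+1) ⊗ₜ[F] b (n+1-(i+1)))
          = ((n.choose i : ℕ) : F) • (a (i+1) ⊗ₜ[F] b (n-i))
            + ((n.choose (i+1) : ℕ) : F) • (a (i+1) ⊗ₜ[F] b (n+1-(i+1))) := by
        intro i _
        have hni : n + 1 - (i+1) = n - i := by omega
        rw [hni, Nat.choose_succ_succ, Nat.cast_add, add_smul]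
      rw [Finset.sum_congr rfl step, Finset.sum_add_distrib]
      have h2 : (∑ i ∈ Finset.range (n+1), ((n.choose (i+1) : ℕ) : F) • (a (i+1) ⊗ₜ[F] b (n+1-(i+1))))
          + ((n.choose 0 : ℕ) : F) • (a 0 ⊗ₜ[F] b (n+1-0))
          = ∑ i ∈ Finset.range (n+1), ((n.choose i : ℕ) : F) • (a i ⊗ₜ[F] b (n+1-i)) := by
        rw [← Finset.sum_range_succ' (fun i => ((n.choose i : ℕ) : F) • (a i ⊗ₜ[F] b (n+1-i))) (n+1),
          Finset.sum_range_succ]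
        simp
      rw [add_assoc, show (((n+1).choose 0 : ℕ) : F) = ((n.choose 0 : ℕ) : F) by simp, h2]
    rw [hT]
end

section
/- Let h = D_H(x^{ε_k+ε_{−k}}), e = D_H(x^{2ε_k+ε_{−k}}), and define d^{(ℓ)} = (1/ℓ!)(ad e)^ℓ on the enveloping algebra. Then for every α ∈ ℤ^{2n} and ℓ ≥ 0, d^{(ℓ)}(D_H(x^α)) = A_ℓ · D_H(x^{α+ℓε_k}), where A_ℓ = (1/ℓ!) ∏_{j=0}^{ℓ−1} (α_k − 2α_{−k} + j) and A_0 = 1. -/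
open Finsupp

/-- The Laurent polynomial algebra `ℚ_{2n}` (see the paper), modelled as the group algebra of
exponent vectors (finitely supported `ℤ`-valued functions on the index set `ℤ`). -/
abbrev LaurentAlg (F : Type*) [Field F] := AddMonoidAlgebra F (ℤ →₀ ℤ)

/-- `D_H(x^α)`, acting on a monomial `x^β` by
`Σ_{i=1}^{n} (α_{−i}β_i − α_iβ_{−i}) x^{α+β−ε_i−ε_{−i}}`. -/
noncomputable def DH (F : Type*) [Field F] (n : ℕ) (α : ℤ →₀ ℤ) :
    Module.End F (LaurentAlg F) :=
  (Finsupp.lsum F fun β => LinearMap.toSpanSingleton F _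
    (∑ i ∈ Finset.Icc (1 : ℤ) (n : ℤ),
      ((α (-i) * β i - α i * β (-i) : ℤ) : F) •
        (AddMonoidAlgebra.single (α + β - Finsupp.single i 1 - Finsupp.single (-i) 1) (1 : F)
          : LaurentAlg F))).comp (AddMonoidAlgebra.coeffLinearEquiv F).toLinearMap

attribute [local instance 100] LieRing.ofAssociativeRing

lemma DH_single (F : Type*) [Field F] (n : ℕ) (α β : ℤ →₀ ℤ) (b : F) :
    DH F n α (AddMonoidAlgebra.single β b) =
      ∑ i ∈ Finset.Icc (1 : ℤ) (n : ℤ),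
        ((α (-i) * β i - α i * β (-i) : ℤ) : F) •
          (AddMonoidAlgebra.single (α + β - Finsupp.single i 1 - Finsupp.single (-i) 1) b
            : LaurentAlg F) := by
  rw [DH, LinearMap.comp_apply, LinearEquiv.coe_coe, AddMonoidAlgebra.coeffLinearEquiv_apply,
    AddMonoidAlgebra.coeff_single]
  erw [Finsupp.lsum_single]
  rw [LinearMap.toSpanSingleton_apply, Finset.smul_sum]
  refine Finset.sum_congr rfl fun i _ => ?_
  rw [smul_comm, AddMonoidAlgebra.smul_single, smul_eq_mul, mul_one]

lemma e_single (F : Type*) [Field F] (n : ℕ) (k : ℤ) (hk1 : 1 ≤ k) (hk2 : k ≤ (n : ℤ))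
    (μ : ℤ →₀ ℤ) (b : F) :
    DH F n (Finsupp.single k 2 + Finsupp.single (-k) 1) (AddMonoidAlgebra.single μ b) =
      ((μ k - 2 * μ (-k) : ℤ) : F) •
        (AddMonoidAlgebra.single (μ + Finsupp.single k 1) b : LaurentAlg F) := by
  have hkk : -k ≠ k := by omega
  rw [DH_single, Finset.sum_eq_single_of_mem k (Finset.mem_Icc.2 ⟨hk1, hk2⟩)]
  · have hc : ((Finsupp.single k 2 + Finsupp.single (-k) 1 : ℤ →₀ ℤ) (-k) * μ k -
        (Finsupp.single k 2 + Finsupp.single (-k) 1 : ℤ →₀ ℤ) k * μ (-k) : ℤ)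
        = μ k - 2 * μ (-k) := by
      simp only [Finsupp.add_apply, Finsupp.single_apply, if_pos rfl, if_neg hkk,
        if_neg (Ne.symm hkk)]
      norm_num
    have h2 : (Finsupp.single k (2:ℤ)) = Finsupp.single k 1 + Finsupp.single k 1 := by
      rw [← Finsupp.single_add]; norm_num
    have hE : Finsupp.single k (2:ℤ) + Finsupp.single (-k) 1 + μ - Finsupp.single k 1
        - Finsupp.single (-k) 1 = μ + Finsupp.single k 1 := by
      rw [h2]; abel
    rw [hc, hE]
  · intro i hi hik
    have hi1 : 1 ≤ i := (Finset.mem_Icc.1 hi).1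
    have h1 : (Finsupp.single k 2 + Finsupp.single (-k) 1 : ℤ →₀ ℤ) (-i) = 0 := by
      rw [Finsupp.add_apply, Finsupp.single_apply, Finsupp.single_apply,
        if_neg (by omega : k ≠ -i), if_neg (by omega : -k ≠ -i)]
      ring
    have h2 : (Finsupp.single k 2 + Finsupp.single (-k) 1 : ℤ →₀ ℤ) i = 0 := by
      rw [Finsupp.add_apply, Finsupp.single_apply, Finsupp.single_apply,
        if_neg (by omega : k ≠ i), if_neg (by omega : -k ≠ i)]
      ring
    rw [h1, h2]
    simp

lemma bracket_e (F : Type*) [Field F] (n : ℕ) (k : ℤ) (hk1 : 1 ≤ k) (hk2 : k ≤ (n : ℤ))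
    (α : ℤ →₀ ℤ) :
    ⁅DH F n (Finsupp.single k 2 + Finsupp.single (-k) 1), DH F n α⁆ =
      ((α k - 2 * α (-k) : ℤ) : F) • DH F n (α + Finsupp.single k 1) := by
  rw [Ring.lie_def]
  apply AddMonoidAlgebra.lhom_ext'
  intro β
  apply LinearMap.ext
  intro b
  simp only [LinearMap.comp_apply, AddMonoidAlgebra.lsingle_apply, LinearMap.sub_apply,
    LinearMap.smul_apply]
  show DH F n (Finsupp.single k 2 + Finsupp.single (-k) 1) (DH F n α (AddMonoidAlgebra.single β b))
      - DH F n α (DH F n (Finsupp.single k 2 + Finsupp.single (-k) 1) (AddMonoidAlgebra.single β b))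
      = ((α k - 2 * α (-k) : ℤ) : F) • DH F n (α + Finsupp.single k 1) (AddMonoidAlgebra.single β b)
  rw [DH_single F n α β b, map_sum, e_single F n k hk1 hk2 β b, map_smul,
    DH_single F n α (β + Finsupp.single k 1) b, DH_single F n (α + Finsupp.single k 1) β b]
  simp only [map_smul, e_single F n k hk1 hk2]
  rw [Finset.smul_sum, Finset.smul_sum, ← Finset.sum_sub_distrib]
  refine Finset.sum_congr rfl fun i hi => ?_
  obtain ⟨hi1, hi2⟩ := Finset.mem_Icc.1 hi
  have hE1 : α + β - Finsupp.single i 1 - Finsupp.single (-i) 1 + Finsupp.single k 1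
      = α + Finsupp.single k 1 + β - Finsupp.single i 1 - Finsupp.single (-i) 1 := by abel
  have hE2 : α + (β + Finsupp.single k 1) - Finsupp.single i 1 - Finsupp.single (-i) 1
      = α + Finsupp.single k 1 + β - Finsupp.single i 1 - Finsupp.single (-i) 1 := by abel
  rw [hE1, hE2, smul_smul, smul_smul, smul_smul, ← sub_smul]
  congr 1
  norm_cast
  simp only [Finsupp.add_apply, Finsupp.sub_apply, Finsupp.single_apply]
  have h1 : ¬ (-i = k) := by omega
  have h2 : ¬ (k = -i) := by omega
  have h3 : ¬ (i = -k) := by omega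
  have h4 : ¬ (-k = i) := by omega
  rcases eq_or_ne i k with rfl | h
  · simp only [if_pos rfl, if_neg h1, if_neg h2, if_neg h3, if_neg h4]
    ring
  · have h5 : ¬ (-i = -k) := by omega
    have h6 : ¬ (k = i) := fun hh => h hh.symm
    simp only [if_neg h, if_neg h1, if_neg h2, if_neg h3, if_neg h4, if_neg h5, if_neg h6]
    ring

lemma pow_ad_DH (F : Type*) [Field F] (n : ℕ) (k : ℤ) (hk1 : 1 ≤ k) (hk2 : k ≤ (n : ℤ))
    (α : ℤ →₀ ℤ) (ℓ : ℕ) :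
    ((LieAlgebra.ad F (Module.End F (LaurentAlg F))
        (DH F n (Finsupp.single k 2 + Finsupp.single (-k) 1)) ^ ℓ) (DH F n α))
      = ((∏ j ∈ Finset.range ℓ, (α k - 2 * α (-k) + (j : ℤ)) : ℤ) : F) •
          DH F n (α + Finsupp.single k (ℓ : ℤ)) := by
  induction ℓ with
  | zero => simp
  | succ m ih =>
    rw [pow_succ', Module.End.mul_apply, ih, map_smul, LieAlgebra.ad_apply,
      bracket_e F n k hk1 hk2, smul_smul]
    have hkk : -k ≠ k := by omega
    have h1 : (α + Finsupp.single k (m : ℤ)) k = α k + m := by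
      rw [Finsupp.add_apply, Finsupp.single_apply, if_pos rfl]
    have h2 : (α + Finsupp.single k (m : ℤ)) (-k) = α (-k) := by
      rw [Finsupp.add_apply, Finsupp.single_apply, if_neg (by omega : k ≠ -k), add_zero]
    have h3 : α + Finsupp.single k (m : ℤ) + Finsupp.single k 1
        = α + Finsupp.single k ((m : ℤ) + 1) := by
      rw [Finsupp.single_add, ← add_assoc]
    rw [h1, h2, h3, Finset.prod_range_succ]
    congr 1
    push_cast
    ring

/-- With `h = D_H(x^{ε_k+ε_{−k}})`, `e = D_H(x^{2ε_k+ε_{−k}})` and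
`d^{(ℓ)} = (1/ℓ!)(ad e)^ℓ`, for every `α ∈ ℤ^{2n}` and `ℓ ≥ 0`:
`d^{(ℓ)}(D_H(x^α)) = A_ℓ · D_H(x^{α+ℓε_k})`, where
`A_ℓ = (1/ℓ!)∏_{j=0}^{ℓ−1}(α_k − 2α_{−k} + j)` (so `A_0 = 1`). -/
theorem stmt_8 (F : Type*) [Field F] [CharZero F] (n : ℕ) (k : ℤ)
    (hk1 : 1 ≤ k) (hk2 : k ≤ (n : ℤ)) (α : ℤ →₀ ℤ)
    (hα : ∀ j, α j ≠ 0 → j ≠ 0 ∧ |j| ≤ (n : ℤ)) (ℓ : ℕ) :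
    (ℓ.factorial : F)⁻¹ •
      ((LieAlgebra.ad F (Module.End F (LaurentAlg F))
          (DH F n (Finsupp.single k 2 + Finsupp.single (-k) 1)) ^ ℓ) (DH F n α))
      = ((ℓ.factorial : F)⁻¹ * ∏ j ∈ Finset.range ℓ, ((α k - 2 * α (-k) + (j : ℤ) : ℤ) : F)) •
          DH F n (α + Finsupp.single k (ℓ : ℤ)) := by
  rw [pow_ad_DH F n k hk1 hk2 α ℓ, smul_smul]
  push_cast
  rfl
end

section
/- In the setting above, define v_a = Σ_{r≥0} (1/r!) h_a^{[r]} e^r t^r and u_b = Σ_{r≥0} ((−1)^r/r!) h_{−b}^{[r]} e^r t^r in U[[t]]. Then v_a · u_b = (1−et)^{−(a+b)} for all scalars a, b. In particular u = u_0 is invertible with u^{−1} = v_0. -/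
/-- The generalized binomial coefficient `C(c,r) = c(c−1)⋯(c−r+1)/r!` for a scalar `c`. -/
noncomputable def binomCoeff {F : Type*} [Field F] (c : F) (r : ℕ) : F :=
  (r.factorial : F)⁻¹ * ∏ j ∈ Finset.range r, (c - j)

open Finset Polynomial

section Aux

set_option linter.unusedSectionVars false

variable {F : Type*} [Field F] [CharZero F]

lemma binomCoeff_def' (c : F) (r : ℕ) :
    binomCoeff c r = (r.factorial : F)⁻¹ * ∏ j ∈ Finset.range r, (c - j) := rfl

lemma prod_eq_fac_mul_binomCoeff (c : F) (n : ℕ) :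
    ∏ j ∈ range n, (c - j) = (n.factorial : F) * binomCoeff c n := by
  rw [binomCoeff, ← mul_assoc, mul_inv_cancel₀ (by exact_mod_cast n.factorial_ne_zero), one_mul]

lemma binomCoeff_neg (c : F) (k : ℕ) :
    binomCoeff c k = (-1 : F) ^ k * binomCoeff ((k : F) - 1 - c) k := by
  unfold binomCoeff
  rw [mul_comm ((-1:F)^k), mul_assoc]
  congr 1
  have h1 : ∏ j ∈ range k, ((k : F) - 1 - c - j)
      = ∏ j ∈ range k, (((k : F) - 1 - c) - ((k - 1 - j : ℕ) : F)) := by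
    rw [← Finset.prod_range_reflect]
  have h2 : ∏ j ∈ range k, (((k : F) - 1 - c) - ((k - 1 - j : ℕ) : F))
      = ∏ j ∈ range k, (-(c - j)) := by
    apply prod_congr rfl
    intro j hj
    have hj' := mem_range.mp hj
    have h3 : (k - 1 - j) + (1 + j) = k := by omega
    have h4 : ((k - 1 - j : ℕ) : F) = (k : F) - 1 - j := by
      have := congrArg (Nat.cast : ℕ → F) h3
      push_cast at this
      linear_combination this
    rw [h4]; ring
  have h5 : ∏ j ∈ range k, (-(c - (j:F))) = (-1:F)^k * ∏ j ∈ range k, (c - j) := by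
    have : ∏ j ∈ range k, (-(c - (j:F))) = ∏ j ∈ range k, ((-1:F) * (c - j)) := by
      apply prod_congr rfl; intros; ring
    rw [this, prod_mul_distrib, prod_const, card_range]
  rw [h1, h2, h5, mul_comm ((-1:F)^k), mul_assoc, ← mul_pow]
  simp

lemma binomCoeff_neg' (c : F) (k : ℕ) :
    (-1 : F) ^ k * binomCoeff c k = binomCoeff ((k : F) - 1 - c) k := by
  rw [binomCoeff_neg c k, ← mul_assoc, ← mul_pow]
  simp

lemma desc_smeval_eq_prod (c : F) (n : ℕ) :
    (descPochhammer ℤ n).smeval c = ∏ j ∈ range n, (c - j) := by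
  induction n with
  | zero => simp [Polynomial.smeval_one]
  | succ n ih =>
    rw [descPochhammer_succ_right, Polynomial.smeval_mul, ih, prod_range_succ]
    congr 1
    simp [Polynomial.smeval_sub, Polynomial.smeval_natCast]

lemma binomCoeff_eq_choose (c : F) (n : ℕ) : binomCoeff c n = Ring.choose c n := by
  have h := Ring.descPochhammer_eq_factorial_smul_choose c n
  rw [desc_smeval_eq_prod, prod_eq_fac_mul_binomCoeff] at h
  have hf : (n.factorial : F) ≠ 0 := by exact_mod_cast n.factorial_ne_zero
  rw [nsmul_eq_mul] at h
  exact mul_left_cancel₀ hf h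

lemma binomCoeff_vandermonde (r s : F) (k : ℕ) :
    binomCoeff (r + s) k = ∑ ij ∈ antidiagonal k, binomCoeff r ij.1 * binomCoeff s ij.2 := by
  simp only [binomCoeff_eq_choose]
  exact Ring.add_choose_eq k (mul_comm r s)

lemma key_scalar (a b : F) (n : ℕ) (x : F) :
    ∑ ij ∈ antidiagonal n, (((ij.1.factorial : F)⁻¹ * ((-1:F)^ij.2 * (ij.2.factorial : F)⁻¹)) *
      ((∏ s ∈ range ij.1, (x + (a - s))) * (∏ s ∈ range ij.2, (x + (-b - ij.1 - s)))))
    = (-1:F)^n * binomCoeff (-(a+b)) n := by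
  have step : ∀ ij ∈ antidiagonal n,
      ((ij.1.factorial : F)⁻¹ * ((-1:F)^ij.2 * (ij.2.factorial : F)⁻¹)) *
        ((∏ s ∈ range ij.1, (x + (a - s))) * (∏ s ∈ range ij.2, (x + (-b - ij.1 - s))))
      = binomCoeff (x + a) ij.1 * binomCoeff ((n:F) - 1 + b - x) ij.2 := by
    rintro ⟨i, j⟩ hij
    have hij' : i + j = n := mem_antidiagonal.mp hij
    have hn : ((n:F)) = (i : F) + j := by exact_mod_cast congrArg (Nat.cast : ℕ → F) hij'.symm
    have e1 : ∏ s ∈ range i, (x + (a - s)) = ∏ s ∈ range i, ((x + a) - s) := by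
      apply prod_congr rfl; intros; ring
    have e2 : ∏ s ∈ range j, (x + (-b - i - s)) = ∏ s ∈ range j, (x - b - i - s) := by
      apply prod_congr rfl; intros; ring
    simp only [e1, e2]
    have harg : (n:F) - 1 + b - x = (j : F) - 1 - (x - b - i) := by rw [hn]; ring
    rw [harg, ← binomCoeff_neg']
    have e3 : ∏ s ∈ range j, (x - b - (i:F) - s) = ∏ s ∈ range j, ((x - b - i) - s) := by
      apply prod_congr rfl; intros; ring
    rw [e3, binomCoeff_def' (x + a) i, binomCoeff_def' (x - b - (i:F)) j]
    ring
  rw [sum_congr rfl step, ← binomCoeff_vandermonde]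
  have harg2 : x + a + ((n:F) - 1 + b - x) = (n:F) - 1 - (-(a+b)) := by ring
  rw [harg2]
  exact (binomCoeff_neg' (-(a+b)) n).symm

lemma alt_sum (n : ℕ) :
    ∑ ij ∈ antidiagonal n, ((-1:F)^ij.1 * ((ij.1.factorial : F)⁻¹ * (ij.2.factorial : F)⁻¹))
    = if n = 0 then 1 else 0 := by
  rw [Finset.Nat.sum_antidiagonal_eq_sum_range_succ_mk]
  dsimp only
  have step : ∀ i ∈ range (n+1),
      ((-1:F)^i * ((i.factorial : F)⁻¹ * ((n-i).factorial : F)⁻¹))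
      = (n.factorial : F)⁻¹ * ((-1:F)^i * (n.choose i)) := by
    intro i hi
    have hi' : i ≤ n := Nat.lt_succ_iff.mp (mem_range.mp hi)
    have key : (n.choose i : F) * i.factorial * (n-i).factorial = n.factorial := by
      exact_mod_cast congrArg (Nat.cast : ℕ → F) (Nat.choose_mul_factorial_mul_factorial hi')
    have h1 : (i.factorial : F) ≠ 0 := by exact_mod_cast i.factorial_ne_zero
    have h2 : ((n-i).factorial : F) ≠ 0 := by exact_mod_cast (n-i).factorial_ne_zero
    have h3 : (n.factorial : F) ≠ 0 := by exact_mod_cast n.factorial_ne_zero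
    have this1 : (i.factorial:F)⁻¹ * ((n-i).factorial:F)⁻¹ = (n.factorial:F)⁻¹ * n.choose i := by
      field_simp
      linear_combination -key
    rw [this1]
    ring
  rw [sum_congr rfl step, ← mul_sum]
  have : ∑ i ∈ range (n+1), ((-1:F)^i * (n.choose i))
      = ((∑ i ∈ range (n+1), ((-1:ℤ)^i * (n.choose i)) : ℤ) : F) := by
    push_cast
    exact sum_congr rfl fun _ _ => by ring
  rw [this, Int.alternating_sum_range_choose]
  split_ifs with h
  · subst h; simp
  · simp

lemma fallingFac_map {A B : Type*} [Ring A] [Ring B] [Algebra F A] [Algebra F B]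
    (φ : A →ₐ[F] B) (h : A) (a : F) (r : ℕ) :
    φ (fallingFac h a r) = fallingFac (φ h) a r := by
  induction r with
  | zero => simp [fallingFac]
  | succ r ih => simp [fallingFac, ih, map_mul, map_add, AlgHom.commutes]

lemma fallingFac_comm_eq_prod (x a : F) (r : ℕ) :
    fallingFac x a r = ∏ s ∈ range r, (x + (a - s)) := by
  induction r with
  | zero => simp [fallingFac]
  | succ r ih => rw [fallingFac, ih, prod_range_succ]; simp [Algebra.algebraMap_self_apply]

lemma eval_fallingFac (x a : F) (r : ℕ) :
    Polynomial.eval x (fallingFac (X : F[X]) a r) = ∏ s ∈ range r, (x + (a - s)) := by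
  rw [← fallingFac_comm_eq_prod]
  have : fallingFac x a r = Polynomial.aeval x (fallingFac (X : F[X]) a r) := by
    rw [fallingFac_map (Polynomial.aeval x) X a r, Polynomial.aeval_X]
  rw [this, Polynomial.coe_aeval_eq_eval]

lemma key_poly (a b : F) (n : ℕ) :
    ∑ ij ∈ antidiagonal n, ((ij.1.factorial : F)⁻¹ * ((-1:F)^ij.2 * (ij.2.factorial : F)⁻¹)) •
      (fallingFac (X : F[X]) a ij.1 * fallingFac (X : F[X]) (-b - ij.1) ij.2)
    = ((-1:F)^n * binomCoeff (-(a+b)) n) • (1 : F[X]) := by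
  apply Polynomial.funext
  intro x
  rw [Polynomial.eval_finset_sum]
  simp only [Polynomial.eval_smul, Polynomial.eval_mul, Polynomial.eval_one, eval_fallingFac,
    smul_eq_mul, mul_one]
  exact key_scalar a b n x

section Ualg

variable {U : Type*} [Ring U] [Algebra F U] (H E : U)

lemma key_U (a b : F) (n : ℕ) :
    ∑ ij ∈ antidiagonal n, ((ij.1.factorial : F)⁻¹ * ((-1:F)^ij.2 * (ij.2.factorial : F)⁻¹)) •
      (fallingFac H a ij.1 * fallingFac H (-b - ij.1) ij.2)
    = ((-1:F)^n * binomCoeff (-(a+b)) n) • (1 : U) := by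
  have hmap := congrArg (Polynomial.aeval H) (key_poly a b n)
  simpa only [map_sum, map_smul, map_mul, fallingFac_map, Polynomial.aeval_X, map_one]
    using hmap

lemma pow_e_h (heh : E * H = H * E - E) (c : F) (i : ℕ) : E ^ i * (H + algebraMap F U c)
    = (H + algebraMap F U (c - i)) * E ^ i := by
  induction i generalizing c with
  | zero => simp
  | succ i ih =>
    have step : ∀ d : F, E * (H + algebraMap F U d) = (H + algebraMap F U (d - 1)) * E := by
      intro d
      rw [mul_add, heh, ← Algebra.commutes d E, add_mul, map_sub, map_one]
      noncomm_ring
    have harg : c - 1 - (i:F) = c - ((i+1 : ℕ) : F) := by push_cast; ring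
    rw [pow_succ, mul_assoc, step c, ← mul_assoc, ih (c-1), mul_assoc, ← pow_succ, harg]

lemma pow_e_falling (heh : E * H = H * E - E) (c : F) (i : ℕ) (j : ℕ) :
    E ^ i * fallingFac H c j = fallingFac H (c - i) j * E ^ i := by
  induction j with
  | zero => simp [fallingFac]
  | succ j ih =>
    have harg : c - (j:F) - i = c - i - j := by ring
    rw [fallingFac, ← mul_assoc, ih, mul_assoc, pow_e_h H E heh (c - j) i,
      ← mul_assoc, fallingFac, harg]

lemma fallingFac_split (c : F) (i : ℕ) (j : ℕ) :
    fallingFac H c (i + j) = fallingFac H c i * fallingFac H (c - i) j := by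
  induction j with
  | zero => simp [fallingFac]
  | succ j ih =>
    have harg : c - ((i+j : ℕ):F) = c - i - j := by push_cast; ring
    rw [show i + (j+1) = (i+j) + 1 from rfl, fallingFac, ih, fallingFac,
      mul_assoc, harg]

lemma main_mul (heh : E * H = H * E - E) (a b : F) :
    (PowerSeries.mk fun r => ((r.factorial : F)⁻¹) • (fallingFac H a r * E ^ r)) *
      (PowerSeries.mk fun r => ((-1:F)^r * (r.factorial : F)⁻¹) • (fallingFac H (-b) r * E ^ r))
    = PowerSeries.mk fun r => ((-1:F)^r * binomCoeff (-(a+b)) r) • E ^ r := by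
  ext n
  rw [PowerSeries.coeff_mul]
  simp only [PowerSeries.coeff_mk]
  have term : ∀ ij ∈ antidiagonal n,
      (((ij.1.factorial : F)⁻¹) • (fallingFac H a ij.1 * E ^ ij.1)) *
        (((-1:F)^ij.2 * (ij.2.factorial : F)⁻¹) • (fallingFac H (-b) ij.2 * E ^ ij.2))
      = (((ij.1.factorial : F)⁻¹ * ((-1:F)^ij.2 * (ij.2.factorial : F)⁻¹)) •
          (fallingFac H a ij.1 * fallingFac H (-b - ij.1) ij.2)) * E ^ n := by
    rintro ⟨i, j⟩ hij
    have hij' : i + j = n := mem_antidiagonal.mp hij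
    have hx : (fallingFac H a i * E ^ i) * (fallingFac H (-b) j * E ^ j)
        = (fallingFac H a i * fallingFac H (-b - i) j) * E ^ n := by
      rw [mul_assoc, ← mul_assoc (E ^ i), pow_e_falling H E heh (-b) i j, mul_assoc, ← pow_add,
        hij', ← mul_assoc]
    rw [smul_mul_assoc, mul_smul_comm, smul_smul, hx, ← smul_mul_assoc]
  rw [sum_congr rfl term, ← sum_mul, key_U, smul_mul_assoc, one_mul]

lemma main_mul2 (heh : E * H = H * E - E) :
    (PowerSeries.mk fun r => ((-1:F)^r * (r.factorial : F)⁻¹) •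
        (fallingFac H (-(0:F)) r * E ^ r)) *
      (PowerSeries.mk fun r => (((r.factorial : F)⁻¹)) • (fallingFac H (0:F) r * E ^ r))
    = 1 := by
  ext n
  rw [PowerSeries.coeff_mul]
  simp only [PowerSeries.coeff_mk, neg_zero]
  have term : ∀ ij ∈ antidiagonal n,
      (((-1:F)^ij.1 * (ij.1.factorial : F)⁻¹) • (fallingFac H (0:F) ij.1 * E ^ ij.1)) *
        (((ij.2.factorial : F)⁻¹) • (fallingFac H (0:F) ij.2 * E ^ ij.2))
      = ((-1:F)^ij.1 * ((ij.1.factorial : F)⁻¹ * (ij.2.factorial : F)⁻¹)) •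
          (fallingFac H (0:F) n * E ^ n) := by
    rintro ⟨i, j⟩ hij
    have hij' : i + j = n := mem_antidiagonal.mp hij
    have hx : (fallingFac H (0:F) i * E ^ i) * (fallingFac H (0:F) j * E ^ j)
        = fallingFac H (0:F) n * E ^ n := by
      rw [mul_assoc, ← mul_assoc (E ^ i), pow_e_falling H E heh (0:F) i j, mul_assoc, ← pow_add,
        hij', ← mul_assoc, ← fallingFac_split, hij']
    rw [smul_mul_assoc, mul_smul_comm, smul_smul, hx, mul_assoc]
  rw [sum_congr rfl term, ← sum_smul, alt_sum, PowerSeries.coeff_one]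
  split_ifs with hn
  · subst hn
    simp [fallingFac]
  · simp

lemma binomCoeff_zero_arg (r : ℕ) : binomCoeff (0:F) r = if r = 0 then 1 else 0 := by
  cases r with
  | zero => simp [binomCoeff]
  | succ r =>
    rw [binomCoeff_def']
    rw [Finset.prod_eq_zero (Finset.mem_range.mpr (Nat.succ_pos r)) (by simp)]
    simp

lemma rhs_one (E : U) :
    (PowerSeries.mk fun r => ((-1:F)^r * binomCoeff (-((0:F)+(0:F))) r) • E ^ r)
      = (1 : PowerSeries U) := by
  ext n
  have h0 : (-((0:F)+(0:F))) = (0:F) := by ring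
  rw [PowerSeries.coeff_mk, PowerSeries.coeff_one, h0, binomCoeff_zero_arg]
  split_ifs with hn
  · subst hn; simp
  · simp

end Ualg
end Aux

/-- In `U[[t]]`, where `U = U(L)` for a Lie algebra `L` over a char-0 field containing
`h, e` with `[h,e] = e`: with `v_a = Σ (1/r!) h_a^{[r]} e^r t^r` and
`u_b = Σ ((−1)^r/r!) h_{−b}^{[r]} e^r t^r`, one has `v_a · u_b = (1−et)^{−(a+b)}`
(the formal binomial series `Σ_r C(−(a+b),r)(−1)^r e^r t^r`); in particular
`u = u_0` is invertible with `u^{−1} = v_0`. -/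
theorem stmt_12 (F L : Type*) [Field F] [CharZero F] [LieRing L] [LieAlgebra F L]
    (h e : L) (hrel : ⁅h, e⁆ = e) (a b : F) :
    letI U := UniversalEnvelopingAlgebra F L
    let ι : L → U := fun x => UniversalEnvelopingAlgebra.ι F x
    let v : F → PowerSeries U := fun c => PowerSeries.mk fun r =>
      ((r.factorial : F)⁻¹) • (fallingFac (ι h) c r * (ι e) ^ r)
    let u : F → PowerSeries U := fun c => PowerSeries.mk fun r =>
      ((-1 : F) ^ r * (r.factorial : F)⁻¹) • (fallingFac (ι h) (-c) r * (ι e) ^ r)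
    v a * u b
        = PowerSeries.mk (fun r =>
            ((-1 : F) ^ r * binomCoeff (-(a + b)) r) • ((ι e) ^ r))
      ∧ u 0 * v 0 = 1 ∧ v 0 * u 0 = 1 := by
  intro ι v u
  letI := LieRing.ofAssociativeRing (A := UniversalEnvelopingAlgebra F L)
  have h1 : (UniversalEnvelopingAlgebra.ι F (L := L)) ⁅h, e⁆
      = ⁅(UniversalEnvelopingAlgebra.ι F) h, (UniversalEnvelopingAlgebra.ι F) e⁆ :=
    LieHom.map_lie _ h e
  rw [hrel, Ring.lie_def] at h1
  have heh : ι e * ι h = ι h * ι e - ι e := by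
    simp only [ι]
    calc (UniversalEnvelopingAlgebra.ι F) e * (UniversalEnvelopingAlgebra.ι F) h
        = (UniversalEnvelopingAlgebra.ι F) h * (UniversalEnvelopingAlgebra.ι F) e -
          ((UniversalEnvelopingAlgebra.ι F) h * (UniversalEnvelopingAlgebra.ι F) e -
           (UniversalEnvelopingAlgebra.ι F) e * (UniversalEnvelopingAlgebra.ι F) h) := by
          noncomm_ring
      _ = (UniversalEnvelopingAlgebra.ι F) h * (UniversalEnvelopingAlgebra.ι F) e -
          (UniversalEnvelopingAlgebra.ι F) e := by rw [← h1]
  refine ⟨main_mul (ι h) (ι e) heh a b, main_mul2 (ι h) (ι e) heh, ?_⟩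
  show (PowerSeries.mk fun r => ((r.factorial : F)⁻¹) •
        (fallingFac (ι h) (0:F) r * (ι e) ^ r)) *
      (PowerSeries.mk fun r =>
        ((-1 : F) ^ r * (r.factorial : F)⁻¹) • (fallingFac (ι h) (-(0:F)) r * (ι e) ^ r)) = 1
  rw [main_mul (ι h) (ι e) heh 0 0, rhs_one]
end
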